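/- Let p be an odd prime and f(x0,x1,x2) = x0^4 + p·x1^4 + x2^4 - 2·x0^2·x2^2 - x0·x1^2·x2 over ℂ. The singular locus of the plane quartic curve C' = {f = 0} ⊂ P^2(ℂ) consists exactly of the two points [1,0,1] and [1,0,-1]. That is, a point [x0,x1,x2] satisfies f = ∂f/∂x0 = ∂f/∂x1 = ∂f/∂x2 = 0 if and only if it equals [1,0,1] or [1,0,-1]. -/
import Mathlib


/-- The singular locus of the plane quartic
`C' = {x0⁴ + p·x1⁴ + x2⁴ - 2x0²x2² - x0x1²x2 = 0} ⊂ ℙ²(ℂ)` consists exactly of the two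
points `[1,0,1]` and `[1,0,-1]`: for a nonzero `(x0,x1,x2)`, the equation and all three
partial derivatives vanish iff the point is `[1,0,1]` or `[1,0,-1]`. -/
theorem stmt4 (p : ℕ) (hp : p.Prime) (hodd : Odd p) :
    ∀ x0 x1 x2 : ℂ, ¬(x0 = 0 ∧ x1 = 0 ∧ x2 = 0) →
      ((x0 ^ 4 + p * x1 ^ 4 + x2 ^ 4 - 2 * x0 ^ 2 * x2 ^ 2 - x0 * x1 ^ 2 * x2 = 0 ∧
        4 * x0 ^ 3 - 4 * x0 * x2 ^ 2 - x1 ^ 2 * x2 = 0 ∧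
        4 * p * x1 ^ 3 - 2 * x0 * x1 * x2 = 0 ∧
        4 * x2 ^ 3 - 4 * x0 ^ 2 * x2 - x0 * x1 ^ 2 = 0) ↔
       ∃ c : ℂ, c ≠ 0 ∧
        ((x0 = c ∧ x1 = 0 ∧ x2 = c) ∨ (x0 = c ∧ x1 = 0 ∧ x2 = -c))) := by
  intro x0 x1 x2 hne
  have hp0 : (p : ℂ) ≠ 0 := Nat.cast_ne_zero.mpr hp.ne_zero
  constructor
  · rintro ⟨hf, h1, h2, h3⟩
    by_cases hx1 : x1 = 0
    · subst hx1
      -- f becomes (x0^2 - x2^2)^2 = 0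
      have hsq : (x0 ^ 2 - x2 ^ 2) ^ 2 = 0 := by linear_combination hf
      have h02 : x0 ^ 2 = x2 ^ 2 := by
        have h := pow_eq_zero_iff (n := 2) (by norm_num) |>.mp hsq
        linear_combination h
      have hx0 : x0 ≠ 0 := by
        rintro rfl
        have : x2 ^ 2 = 0 := by linear_combination -h02
        exact hne ⟨rfl, rfl, pow_eq_zero_iff (n := 2) (by norm_num) |>.mp this⟩
      refine ⟨x0, hx0, ?_⟩
      have hfac : (x2 - x0) * (x2 + x0) = 0 := by linear_combination -h02
      rcases mul_eq_zero.mp hfac with h | h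
      · exact Or.inl ⟨rfl, rfl, by linear_combination h⟩
      · exact Or.inr ⟨rfl, rfl, by linear_combination h⟩
    · exfalso
      -- from h2 : x0 * x2 = 2 * p * x1 ^ 2
      have key : x0 * x2 = 2 * p * x1 ^ 2 := by
        have hfac : x1 * (4 * (p : ℂ) * x1 ^ 2 - 2 * x0 * x2) = 0 := by
          linear_combination h2
        rcases mul_eq_zero.mp hfac with h | h
        · exact absurd h hx1
        · linear_combination -h / 2
      have hA : 4 * x0 ^ 4 - 4 * x0 ^ 2 * x2 ^ 2 = 2 * p * x1 ^ 4 := by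
        linear_combination x0 * h1 + x1 ^ 2 * key
      have hF : (x0 ^ 2 - x2 ^ 2) ^ 2 = p * x1 ^ 4 := by
        linear_combination hf + x1 ^ 2 * key
      have hprod : (x0 ^ 2 - x2 ^ 2) * (x0 ^ 2 + x2 ^ 2) = 0 := by
        linear_combination hA / 2 - hF
      have hx1' : x1 ^ 4 ≠ 0 := pow_ne_zero 4 hx1
      rcases mul_eq_zero.mp hprod with h | h
      · -- x0^2 = x2^2 forces p * x1^4 = 0
        have hz : (p : ℂ) * x1 ^ 4 = 0 := by
          linear_combination (x0 ^ 2 - x2 ^ 2) * h - hF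
        exact (mul_ne_zero hp0 hx1') hz
      · -- x2^2 = -x0^2
        have hp4 : (p : ℂ) * x1 ^ 4 = 4 * x0 ^ 4 := by
          linear_combination -hF - (3 * x0 ^ 2 - x2 ^ 2) * h
        have hzero : (16 * (p : ℂ) + 1) * x0 ^ 4 = 0 := by
          linear_combination -(x0 * x2 + 2 * (p : ℂ) * x1 ^ 2) * key + x0 ^ 2 * h
            - 4 * (p : ℂ) * hp4
        have h16 : (16 * (p : ℂ) + 1) ≠ 0 := by
          have : ((16 * p + 1 : ℕ) : ℂ) ≠ 0 := Nat.cast_ne_zero.mpr (by omega)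
          push_cast at this
          convert this using 1
        have hx0 : x0 = 0 :=
          pow_eq_zero_iff (n := 4) (by norm_num) |>.mp
            ((mul_eq_zero.mp hzero).resolve_left h16)
        have : (p : ℂ) * x1 ^ 4 = 0 := by rw [hp4, hx0]; ring
        exact (mul_ne_zero hp0 hx1') this
  · rintro ⟨c, hc, ⟨rfl, rfl, rfl⟩ | ⟨rfl, rfl, rfl⟩⟩ <;>
      exact ⟨by ring, by ring, by ring, by ring⟩
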